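/- If G is a connected bipartite graph with d vertices and e edges, then c_4(G) ≤ e(e-d+1)/4, with equality if and only if G is a tree or a complete bipartite graph. -/

import Mathlib

open SimpleGraph

variable {V : Type*}

/-- Number of 4-cycle subgraphs of `G`: each 4-cycle corresponds to 8 ordered
tuples `(a,b,c,d)` of vertices with `a~b~c~d~a` and `a ≠ c`, `b ≠ d`. -/
noncomputable def c4 (G : SimpleGraph V) : ℕ :=
  Nat.card {p : V × V × V × V //
    G.Adj p.1 p.2.1 ∧ G.Adj p.2.1 p.2.2.1 ∧ G.Adj p.2.2.1 p.2.2.2 ∧ G.Adj p.2.2.2 p.1 ∧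
    p.1 ≠ p.2.2.1 ∧ p.2.1 ≠ p.2.2.2} / 8

/-- Number of `K₄` subgraphs of `G`, i.e. of 4-element cliques. -/
noncomputable def k4 (G : SimpleGraph V) : ℕ :=
  Nat.card {s : Finset V // G.IsNClique 4 s}

/-- Number of edges of `G`. -/
noncomputable def edgeCount (G : SimpleGraph V) : ℕ := Nat.card G.edgeSet

/-- Degree of the vertex `v` in `G`. -/
noncomputable def deg (G : SimpleGraph V) (v : V) : ℕ := Nat.card (G.neighborSet v)

/-- Minimum degree of `G`. -/
noncomputable def minDeg (G : SimpleGraph V) : ℕ := sInf (Set.range (deg G))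

/-- Maximum degree of `G`. -/
noncomputable def maxDeg (G : SimpleGraph V) : ℕ := sSup (Set.range (deg G))

/-- Clique number of `G`. -/
noncomputable def cliqueNum (G : SimpleGraph V) : ℕ :=
  sSup {n | ∃ s : Finset V, G.IsNClique n s}

/-- `G` has at least one odd cycle. -/
def HasOddCycle (G : SimpleGraph V) : Prop :=
  ∃ (v : V) (w : G.Walk v v), w.IsCycle ∧ Odd w.length

/-- Number of triangles of `G` containing both vertices `i` and `j`
(for an edge `{i,j}`, the number of common neighbors of `i` and `j`). -/
noncomputable def c3edge (G : SimpleGraph V) (i j : V) : ℕ :=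
  Nat.card {k : V // G.Adj i k ∧ G.Adj j k}

/-- Number of 4-cycles of `G` containing the edge `{i,j}`: such a cycle
`i - j - k - l - i` is determined by the ordered pair `(k,l)`. -/
noncomputable def c4edge (G : SimpleGraph V) (i j : V) : ℕ :=
  Nat.card {p : V × V // G.Adj j p.1 ∧ G.Adj p.1 p.2 ∧ G.Adj p.2 i ∧ p.1 ≠ i ∧ p.2 ≠ j}

/-- Number of 4-cycles of `G` passing through the vertex `v`. -/
noncomputable def c4vertex (G : SimpleGraph V) (v : V) : ℕ :=
  Nat.card {p : V × V × V // G.Adj v p.1 ∧ G.Adj p.1 p.2.1 ∧ G.Adj p.2.1 p.2.2 ∧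
    G.Adj p.2.2 v ∧ p.1 ≠ p.2.2 ∧ v ≠ p.2.1} / 2


open Finset

-- triangle-free from 2-colorability
lemma no_triangle {G : SimpleGraph V} (hbip : G.Colorable 2) {a b c : V}
    (hab : G.Adj a b) (hbc : G.Adj b c) (hac : G.Adj a c) : False := by
  obtain ⟨C⟩ := hbip
  have h1 := C.valid hab
  have h2 := C.valid hbc
  have h3 := C.valid hac
  have := (C a).2; have := (C b).2; have := (C c).2
  omega

-- reachability transfer to deleteEdges
lemma preconnected_deleteEdges {G : SimpleGraph V} (s : Set (Sym2 V))
    (h : ∀ a b, G.Adj a b → (G.deleteEdges s).Reachable a b)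
    (hc : G.Preconnected) : (G.deleteEdges s).Preconnected := by
  intro u v
  have hr := hc u v
  obtain ⟨w⟩ := hr
  induction w with
  | nil => exact Reachable.refl _
  | cons hadj _ ih => exact (h _ _ hadj).trans ih

lemma exists_parent {G : SimpleGraph V} (hc : G.Connected) (r w : V) (hw : w ≠ r) :
    ∃ u, G.Adj w u ∧ G.dist u r + 1 = G.dist w r := by
  have hd : G.dist w r ≠ 0 := by
    rw [SimpleGraph.dist_ne_zero_iff_ne_and_reachable]
    exact ⟨hw, hc w r⟩
  obtain ⟨p, hp⟩ := exists_walk_of_dist_ne_zero hd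
  have hnil : ¬ p.Nil := by
    intro h
    rw [SimpleGraph.Walk.nil_iff_length_eq] at h
    omega
  obtain ⟨u, hadj, q, rfl⟩ := SimpleGraph.Walk.not_nil_iff.mp hnil
  refine ⟨u, hadj, ?_⟩
  have h1 : G.dist u r ≤ q.length := SimpleGraph.dist_le q
  have h2 : G.dist w r ≤ G.dist w u + G.dist u r := hc.dist_triangle
  have h3 : G.dist w u ≤ 1 := by
    have := SimpleGraph.dist_le (SimpleGraph.Walk.cons hadj SimpleGraph.Walk.nil)
    simpa using this
  simp only [SimpleGraph.Walk.length_cons] at hp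
  omega

lemma card_le_edgeCount_aux [Fintype V] (G : SimpleGraph V) (hc : G.Connected) :
    Fintype.card V ≤ G.edgeSet.ncard + 1 := by
  classical
  obtain ⟨r⟩ := hc.nonempty
  choose f hf1 hf2 using fun w (hw : w ≠ r) => exists_parent hc r w hw
  set g : V → Sym2 V := fun w => if h : w = r then s(w, w) else s(w, f w h) with hg
  have hmaps : ∀ a ∈ {w : V | w ≠ r}, g a ∈ G.edgeSet := by
    intro a ha
    simp only [Set.mem_setOf_eq] at ha
    simp only [hg, dif_neg ha]
    exact (hf1 a ha)
  have hinj : Set.InjOn g {w : V | w ≠ r} := by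
    intro a ha b hb hab
    simp only [Set.mem_setOf_eq] at ha hb
    simp only [hg, dif_neg ha, dif_neg hb, Sym2.eq_iff] at hab
    rcases hab with ⟨rfl, _⟩ | ⟨h1, h2⟩
    · rfl
    · exfalso
      have da := hf2 a ha
      have db := hf2 b hb
      rw [h2] at da
      rw [← h1] at db
      omega
  have hcard : ({w : V | w ≠ r}).ncard ≤ G.edgeSet.ncard :=
    Set.ncard_le_ncard_of_injOn g hmaps hinj (Set.toFinite _)
  have : ({w : V | w ≠ r}).ncard = Fintype.card V - 1 := by
    have : {w : V | w ≠ r} = (↑(({r} : Finset V)ᶜ) : Set V) := by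
      ext x; simp
    rw [this, Set.ncard_coe_finset, Finset.card_compl, Finset.card_singleton]
  have hpos : 1 ≤ Fintype.card V := Fintype.card_pos_iff.mpr ⟨r⟩
  omega

lemma card_le_edgeCount [Fintype V] (G : SimpleGraph V) (hc : G.Connected) :
    Fintype.card V ≤ Nat.card G.edgeSet + 1 := by
  rw [Nat.card_coe_set_eq]
  exact card_le_edgeCount_aux G hc

/-- the set of ordered 4-tuples tracing a 4-cycle -/
abbrev T4 (G : SimpleGraph V) : Type _ :=
  {p : V × V × V × V //
    G.Adj p.1 p.2.1 ∧ G.Adj p.2.1 p.2.2.1 ∧ G.Adj p.2.2.1 p.2.2.2 ∧ G.Adj p.2.2.2 p.1 ∧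
    p.1 ≠ p.2.2.1 ∧ p.2.1 ≠ p.2.2.2}

abbrev S4 (G : SimpleGraph V) (i j : V) : Type _ :=
  {p : V × V // G.Adj j p.1 ∧ G.Adj p.1 p.2 ∧ G.Adj p.2 i ∧ p.1 ≠ i ∧ p.2 ≠ j}

lemma c4edge_eq_card (G : SimpleGraph V) (i j : V) : c4edge G i j = Nat.card (S4 G i j) := rfl

def tupleEquiv (G : SimpleGraph V) : T4 G ≃ Σ d : G.Dart, S4 G d.fst d.snd where
  toFun x := ⟨⟨(x.1.1, x.1.2.1), x.2.1⟩, ⟨(x.1.2.2.1, x.1.2.2.2),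
    x.2.2.1, x.2.2.2.1, x.2.2.2.2.1, Ne.symm x.2.2.2.2.2.1, Ne.symm x.2.2.2.2.2.2⟩⟩
  invFun x := ⟨(x.1.fst, x.1.snd, x.2.1.1, x.2.1.2),
    x.1.adj, x.2.2.1, x.2.2.2.1, x.2.2.2.2.1, Ne.symm x.2.2.2.2.2.1, Ne.symm x.2.2.2.2.2.2⟩
  left_inv x := rfl
  right_inv x := rfl

lemma card_T4 [Fintype V] (G : SimpleGraph V) [Fintype G.Dart] :
    Nat.card (T4 G) = ∑ d : G.Dart, c4edge G d.fst d.snd := by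
  classical
  rw [Nat.card_congr (tupleEquiv G)]
  rw [Nat.card_eq_fintype_card, Fintype.card_sigma]
  congr 1
  ext d
  rw [c4edge_eq_card, Nat.card_eq_fintype_card]

/-- the edges giving 4-cycles through the (ordered) edge `(i,j)` -/
def Sset (G : SimpleGraph V) (i j : V) : Set (Sym2 V) :=
  {x | ∃ k l, x = s(k, l) ∧ G.Adj j k ∧ G.Adj k l ∧ G.Adj l i ∧ k ≠ i ∧ l ≠ j}

lemma Sset_subset (G : SimpleGraph V) (i j : V) : Sset G i j ⊆ G.edgeSet := by
  rintro x ⟨k, l, rfl, _, hkl, _, _, _⟩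
  exact hkl

lemma Sset_avoid (G : SimpleGraph V) {i j : V} (hij : G.Adj i j) {x : Sym2 V}
    (hx : x ∈ Sset G i j) : ¬ i ∈ x ∧ ¬ j ∈ x := by
  obtain ⟨k, l, rfl, hjk, hkl, hli, hki, hlj⟩ := hx
  constructor
  · intro h
    rcases Sym2.mem_iff.mp h with h | h
    · exact hki h.symm
    · exact G.irrefl (h ▸ hli)
  · intro h
    rcases Sym2.mem_iff.mp h with h | h
    · exact G.irrefl (h ▸ hjk)
    · exact hlj h.symm

lemma card_Sset (G : SimpleGraph V) (hbip : G.Colorable 2) {i j : V} (hij : G.Adj i j) :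
    Nat.card (Sset G i j) = c4edge G i j := by
  rw [c4edge_eq_card]
  refine (Nat.card_congr (Equiv.ofBijective
    (fun p : S4 G i j => (⟨s(p.1.1, p.1.2), p.1.1, p.1.2, rfl, p.2.1, p.2.2.1, p.2.2.2.1,
      p.2.2.2.2.1, p.2.2.2.2.2⟩ : Sset G i j)) ⟨?_, ?_⟩)).symm
  · rintro ⟨⟨k, l⟩, hjk, hkl, hli, hki, hlj⟩ ⟨⟨k', l'⟩, hjk', hkl', hli', hki', hlj'⟩ h
    simp only [Subtype.mk_eq_mk, Sym2.eq_iff] at h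
    rcases Sym2.eq_iff.mp (congrArg Subtype.val h) with ⟨rfl, rfl⟩ | ⟨rfl, rfl⟩
    · rfl
    · exact (no_triangle hbip hij hjk hli'.symm).elim
  · rintro ⟨x, k, l, rfl, hjk, hkl, hli, hki, hlj⟩
    exact ⟨⟨(k, l), hjk, hkl, hli, hki, hlj⟩, rfl⟩

lemma deleteSset_connected (G : SimpleGraph V) {i j : V} (hij : G.Adj i j)
    (hconn : G.Connected) : (G.deleteEdges (Sset G i j)).Connected := by
  have hsurv : ∀ a b, G.Adj a b → (a = i ∨ a = j ∨ b = i ∨ b = j) →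
      (G.deleteEdges (Sset G i j)).Adj a b := by
    intro a b hab hor
    rw [SimpleGraph.deleteEdges_adj]
    refine ⟨hab, fun hmem => ?_⟩
    obtain ⟨hni, hnj⟩ := Sset_avoid G hij hmem
    rcases hor with rfl | rfl | rfl | rfl
    · exact hni (Sym2.mem_mk_left _ _)
    · exact hnj (Sym2.mem_mk_left _ _)
    · exact hni (Sym2.mem_mk_right _ _)
    · exact hnj (Sym2.mem_mk_right _ _)
  rw [SimpleGraph.connected_iff]
  refine ⟨preconnected_deleteEdges _ ?_ hconn.preconnected, hconn.nonempty⟩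
  intro a b hab
  by_cases hmem : s(a, b) ∈ Sset G i j
  · obtain ⟨k, l, hkl, hjk, hkladj, hli, hki, hlj⟩ := hmem
    have hji : (G.deleteEdges (Sset G i j)).Adj j i := hsurv j i hij.symm (Or.inr (Or.inl rfl))
    rcases Sym2.eq_iff.mp hkl with ⟨rfl, rfl⟩ | ⟨rfl, rfl⟩
    · have h1 : (G.deleteEdges (Sset G i j)).Adj a j := hsurv a j hjk.symm (by tauto)
      have h2 : (G.deleteEdges (Sset G i j)).Adj i b := hsurv i b hli.symm (by tauto)
      exact (h1.reachable.trans hji.reachable).trans h2.reachable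
    · have h1 : (G.deleteEdges (Sset G i j)).Adj a i := hsurv a i hli (by tauto)
      have h2 : (G.deleteEdges (Sset G i j)).Adj j b := hsurv j b hjk (by tauto)
      exact (h1.reachable.trans hji.symm.reachable).trans h2.reachable
  · exact (SimpleGraph.deleteEdges_adj.mpr ⟨hab, hmem⟩).reachable

lemma edgeCount_delete_add (G : SimpleGraph V) [Fintype V] (s : Set (Sym2 V))
    (hs : s ⊆ G.edgeSet) :
    Nat.card (G.deleteEdges s).edgeSet + Nat.card s = Nat.card G.edgeSet := by
  rw [SimpleGraph.edgeSet_deleteEdges, Nat.card_coe_set_eq, Nat.card_coe_set_eq,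
    Nat.card_coe_set_eq]
  exact Set.ncard_diff_add_ncard_of_subset hs (Set.toFinite _)

/-- KEY BOUND: every (ordered) edge lies in at most `e - d + 1` four-cycles. -/
lemma c4edge_bound [Fintype V] (G : SimpleGraph V) (hconn : G.Connected)
    (hbip : G.Colorable 2) {i j : V} (hij : G.Adj i j) :
    c4edge G i j + (Fintype.card V - 1) ≤ edgeCount G := by
  have h1 := card_le_edgeCount _ (deleteSset_connected G hij hconn)
  have h2 := edgeCount_delete_add G (Sset G i j) (Sset_subset G i j)
  have h3 := card_Sset G hbip hij
  have h4 : 1 ≤ Fintype.card V := Fintype.card_pos_iff.mpr hconn.nonempty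
  unfold edgeCount
  omega

lemma dart_count [Fintype V] (G : SimpleGraph V) [DecidableRel G.Adj] :
    Fintype.card G.Dart = 2 * edgeCount G := by
  classical
  rw [SimpleGraph.dart_card_eq_twice_card_edges]
  congr 1
  rw [SimpleGraph.edgeFinset, Set.toFinset_card, edgeCount, Nat.card_eq_fintype_card]

lemma T4_bound [Fintype V] (G : SimpleGraph V) (hconn : G.Connected)
    (hbip : G.Colorable 2) :
    Nat.card (T4 G) ≤ (2 * edgeCount G) * (edgeCount G + 1 - Fintype.card V) := by
  classical
  letI : DecidableRel G.Adj := Classical.decRel _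
  rw [card_T4]
  calc ∑ d : G.Dart, c4edge G d.fst d.snd
      ≤ ∑ _d : G.Dart, (edgeCount G + 1 - Fintype.card V) := by
        refine Finset.sum_le_sum fun d _ => ?_
        have := c4edge_bound G hconn hbip d.adj
        have h4 : 1 ≤ Fintype.card V := Fintype.card_pos_iff.mpr hconn.nonempty
        omega
    _ = (2 * edgeCount G) * (edgeCount G + 1 - Fintype.card V) := by
        rw [Finset.sum_const, smul_eq_mul, Finset.card_univ, dart_count]

lemma iso_completeBipartite [Fintype V] (G : SimpleGraph V) (X Y : Finset V)
    (hadj : ∀ a b, G.Adj a b ↔ ((a ∈ X ∧ b ∈ Y) ∨ (a ∈ Y ∧ b ∈ X)))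
    (hcompl : ∀ v, ¬ v ∈ X ↔ v ∈ Y) :
    ∃ l m : ℕ, Nonempty (G ≃g completeBipartiteGraph (Fin l) (Fin m)) := by
  classical
  refine ⟨X.card, Y.card, ⟨?_⟩⟩
  have eX : {v : V // v ∈ X} ≃ Fin X.card :=
    Fintype.equivFinOfCardEq (by simp [Fintype.card_coe])
  have eY : {v : V // ¬ v ∈ X} ≃ Fin Y.card :=
    (Equiv.subtypeEquivRight hcompl).trans
      (Fintype.equivFinOfCardEq (by simp [Fintype.card_coe]))
  let φ : V ≃ (Fin X.card ⊕ Fin Y.card) :=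
    (Equiv.sumCompl (· ∈ X)).symm.trans (Equiv.sumCongr eX eY)
  have hleft : ∀ a : V, (φ a).isLeft ↔ a ∈ X := by
    intro a
    by_cases h : a ∈ X
    · simp [φ, Equiv.sumCompl_symm_apply_of_pos h, h]
    · simp [φ, Equiv.sumCompl_symm_apply_of_neg h, h]
  have hright : ∀ a : V, (φ a).isRight ↔ a ∈ Y := by
    intro a
    rw [← hcompl, ← hleft]
    cases φ a <;> simp
  refine ⟨φ, ?_⟩
  intro a b
  simp only [completeBipartiteGraph_adj, hadj, hleft, hright]

lemma O_empty [Fintype V] [DecidableEq V] (G : SimpleGraph V) [DecidableRel G.Adj]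
    (hbip : G.Colorable 2) (hconn : G.Connected)
    (hmin : ∀ v, ∃ w w', G.Adj v w ∧ G.Adj v w' ∧ w ≠ w')
    (k : ℕ) (hek : edgeCount G + 1 = Fintype.card V + k)
    (hall : ∀ a b, G.Adj a b → c4edge G a b = k)
    {i j : V} (hij : G.Adj i j) :
    G.neighborFinset j ∪ G.neighborFinset i = Finset.univ := by
  classical
  set X := G.neighborFinset j with hX
  set Y := G.neighborFinset i with hY
  set O := Finset.univ \ (X ∪ Y) with hO
  have hiX : i ∈ X := by rw [hX, SimpleGraph.mem_neighborFinset]; exact hij.symm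
  have hjY : j ∈ Y := by rw [hY, SimpleGraph.mem_neighborFinset]; exact hij
  have hOX : ∀ v ∈ O, ¬ G.Adj j v ∧ ¬ G.Adj i v := by
    intro v hv
    rw [hO, Finset.mem_sdiff, Finset.mem_union, hX, hY,
      SimpleGraph.mem_neighborFinset, SimpleGraph.mem_neighborFinset] at hv
    tauto
  have hdeg2 : ∀ v, 2 ≤ G.degree v := by
    intro v
    obtain ⟨w, w', h1, h2, hne⟩ := hmin v
    have : ({w, w'} : Finset V) ⊆ G.neighborFinset v := by
      intro x hx
      rcases Finset.mem_insert.mp hx with rfl | hx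
      · exact (SimpleGraph.mem_neighborFinset _ _ _).mpr h1
      · rw [Finset.mem_singleton] at hx
        subst hx
        exact (SimpleGraph.mem_neighborFinset _ _ _).mpr h2
    calc 2 = ({w, w'} : Finset V).card := (Finset.card_pair hne).symm
      _ ≤ _ := Finset.card_le_card this
    
  have hE : edgeCount G = G.edgeFinset.card := by
    rw [edgeCount, SimpleGraph.edgeFinset, Set.toFinset_card, Nat.card_eq_fintype_card]
  set E1 := G.incidenceFinset i ∪ G.incidenceFinset j with hE1
  have hE1card : E1.card + 1 = G.degree i + G.degree j := by
    have hinter : G.incidenceFinset i ∩ G.incidenceFinset j = {s(i, j)} := by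
      ext x
      simp only [Finset.mem_inter, SimpleGraph.mem_incidenceFinset, Finset.mem_singleton]
      rw [← Set.mem_inter_iff, SimpleGraph.incidenceSet_inter_incidenceSet_of_adj _ hij]
      rfl
    have := Finset.card_union_add_card_inter (G.incidenceFinset i) (G.incidenceFinset j)
    rw [hinter, Finset.card_singleton, SimpleGraph.card_incidenceFinset_eq_degree,
      SimpleGraph.card_incidenceFinset_eq_degree] at this
    rw [hE1]
    omega
  set E2 := (Set.toFinite (Sset G i j)).toFinset with hE2
  have hE2mem : ∀ x, x ∈ E2 ↔ x ∈ Sset G i j := by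
    intro x; rw [hE2, Set.Finite.mem_toFinset]
  have hE2card : E2.card = k := by
    have h1 : Nat.card (Sset G i j) = k := by rw [card_Sset G hbip hij, hall i j hij]
    rw [← h1, hE2, Nat.card_coe_set_eq, Set.ncard_eq_toFinset_card]
  have hE12disj : Disjoint E1 E2 := by
    rw [Finset.disjoint_left]
    intro x hx1 hx2
    obtain ⟨hni, hnj⟩ := Sset_avoid G hij ((hE2mem x).mp hx2)
    rw [hE1, Finset.mem_union, SimpleGraph.mem_incidenceFinset,
      SimpleGraph.mem_incidenceFinset] at hx1
    rcases hx1 with h | h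
    · exact hni h.2
    · exact hnj h.2
  have hE1sub : E1 ⊆ G.edgeFinset := by
    intro x hx
    rw [hE1, Finset.mem_union, SimpleGraph.mem_incidenceFinset,
      SimpleGraph.mem_incidenceFinset] at hx
    rw [SimpleGraph.mem_edgeFinset]
    rcases hx with h | h
    · exact h.1
    · exact h.1
  have hE2sub : E2 ⊆ G.edgeFinset := by
    intro x hx
    rw [SimpleGraph.mem_edgeFinset]
    exact Sset_subset G i j ((hE2mem x).mp hx)
  set E3 := G.edgeFinset \ (E1 ∪ E2) with hE3
  have hcount : E3.card + (E1.card + E2.card) = G.edgeFinset.card := by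
    have hsub : E1 ∪ E2 ⊆ G.edgeFinset := Finset.union_subset hE1sub hE2sub
    have h1 : E3.card = G.edgeFinset.card - (E1 ∪ E2).card := by
      rw [hE3, Finset.card_sdiff_of_subset hsub]
    have h2 : (E1 ∪ E2).card = E1.card + E2.card := Finset.card_union_of_disjoint hE12disj
    have h3 : (E1 ∪ E2).card ≤ G.edgeFinset.card := Finset.card_le_card hsub
    omega
  have hXY : Disjoint X Y := by
    rw [Finset.disjoint_left]
    intro v hv1 hv2
    rw [hX, SimpleGraph.mem_neighborFinset] at hv1
    rw [hY, SimpleGraph.mem_neighborFinset] at hv2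
    exact no_triangle hbip hij hv1 hv2
  have hOcard : O.card + (G.degree i + G.degree j) = Fintype.card V := by
    have h1 : (X ∪ Y).card = G.degree j + G.degree i := by
      rw [Finset.card_union_of_disjoint hXY, hX, hY, SimpleGraph.card_neighborFinset_eq_degree,
        SimpleGraph.card_neighborFinset_eq_degree]
    have h2 : O.card = Fintype.card V - (X ∪ Y).card := by
      rw [hO, Finset.card_sdiff_of_subset (Finset.subset_univ _), Finset.card_univ]
    have h3 : (X ∪ Y).card ≤ Fintype.card V := by
      rw [← Finset.card_univ]; exact Finset.card_le_card (Finset.subset_univ _)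
    omega
  -- incidence edges of vertices in O are exactly the E3-edges containing them
  have step1 : ∀ v ∈ O, G.incidenceFinset v = E3.filter (v ∈ ·) := by
    intro v hv
    obtain ⟨hnjv, hniv⟩ := hOX v hv
    have hvi : v ≠ i := by
      rintro rfl
      exact (Finset.mem_sdiff.mp hv).2 (Finset.mem_union_left _ hiX)
    have hvj : v ≠ j := by
      rintro rfl
      exact (Finset.mem_sdiff.mp hv).2 (Finset.mem_union_right _ hjY)
    ext x
    simp only [Finset.mem_filter]
    constructor
    · intro hx
      have hxinc : x ∈ G.incidenceSet v := by
        rwa [SimpleGraph.mem_incidenceFinset] at hx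
      have hvx : v ∈ x := hxinc.2
      have hxe : x ∈ G.edgeFinset := (SimpleGraph.mem_edgeFinset).mpr hxinc.1
      refine ⟨Finset.mem_sdiff.mpr ⟨hxe, ?_⟩, hvx⟩
      intro hmem
      rcases Finset.mem_union.mp hmem with h | h
      · rcases Finset.mem_union.mp h with h | h
        · rw [SimpleGraph.mem_incidenceFinset] at h
          exact hniv (G.adj_of_mem_incidenceSet (Ne.symm hvi) h hxinc)
        · rw [SimpleGraph.mem_incidenceFinset] at h
          exact hnjv (G.adj_of_mem_incidenceSet (Ne.symm hvj) h hxinc)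
      · obtain ⟨a, b, rfl, hja, hab, hbi, hai', hbj'⟩ := (hE2mem x).mp h
        rcases Sym2.mem_iff.mp hvx with rfl | rfl
        · exact hnjv hja
        · exact hniv hbi.symm
    · rintro ⟨hx3, hvx⟩
      rw [SimpleGraph.mem_incidenceFinset]
      exact ⟨(SimpleGraph.mem_edgeFinset).mp (Finset.mem_sdiff.mp hx3).1, hvx⟩
  have step2 : ∑ v ∈ O, G.degree v = ∑ x ∈ E3, (O.filter (· ∈ x)).card := by
    calc ∑ v ∈ O, G.degree v = ∑ v ∈ O, (E3.filter (v ∈ ·)).card := by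
          refine Finset.sum_congr rfl fun v hv => ?_
          rw [← SimpleGraph.card_incidenceFinset_eq_degree, step1 v hv]
      _ = ∑ v ∈ O, ∑ x ∈ E3, (if v ∈ x then 1 else 0) := by
          refine Finset.sum_congr rfl fun v _ => ?_
          rw [Finset.card_filter]
      _ = ∑ x ∈ E3, ∑ v ∈ O, (if v ∈ x then 1 else 0) := Finset.sum_comm
      _ = ∑ x ∈ E3, (O.filter (· ∈ x)).card := by
          refine Finset.sum_congr rfl fun x _ => ?_
          rw [Finset.card_filter]
  have step3 : ∀ x ∈ E3, (O.filter (· ∈ x)).card ≤ 2 := by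
    intro x _
    induction x with
    | _ a b =>
      have hsub : O.filter (· ∈ s(a, b)) ⊆ {a, b} := by
        intro v hv
        have := (Finset.mem_filter.mp hv).2
        rcases Sym2.mem_iff.mp this with rfl | rfl
        · exact Finset.mem_insert_self _ _
        · exact Finset.mem_insert_of_mem (Finset.mem_singleton_self _)
      calc (O.filter (· ∈ s(a, b))).card ≤ ({a, b} : Finset V).card := Finset.card_le_card hsub
        _ ≤ 2 := Finset.card_insert_le _ _ |>.trans (by simp)
  have step4 : 2 * O.card ≤ ∑ v ∈ O, G.degree v := by
    calc 2 * O.card = ∑ _v ∈ O, 2 := by rw [Finset.sum_const, smul_eq_mul, mul_comm]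
      _ ≤ _ := Finset.sum_le_sum fun v _ => hdeg2 v
  have step5 : E3.card = O.card := by
    rw [hE] at hek
    omega
  have step6 : ∀ x ∈ E3, (O.filter (· ∈ x)).card = 2 := by
    by_contra hcon
    push_neg at hcon
    obtain ⟨x0, hx0, hne⟩ := hcon
    have hlt : ∑ x ∈ E3, (O.filter (· ∈ x)).card < ∑ _x ∈ E3, 2 :=
      Finset.sum_lt_sum (fun x hx => step3 x hx)
        ⟨x0, hx0, lt_of_le_of_ne (step3 x0 hx0) hne⟩
    rw [Finset.sum_const, smul_eq_mul] at hlt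
    omega
  have step7 : ∀ a b, G.Adj a b → a ∈ O → b ∈ O := by
    intro a b hab ha
    have hmem : s(a, b) ∈ E3.filter (a ∈ ·) := by
      rw [← step1 a ha, SimpleGraph.mem_incidenceFinset]
      exact ⟨hab, Sym2.mem_mk_left _ _⟩
    obtain ⟨hE3mem, -⟩ := Finset.mem_filter.mp hmem
    have hcard2 := step6 _ hE3mem
    have hsub : O.filter (· ∈ s(a, b)) ⊆ {a, b} := by
      intro v hv
      have := (Finset.mem_filter.mp hv).2
      rcases Sym2.mem_iff.mp this with rfl | rfl
      · exact Finset.mem_insert_self _ _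
      · exact Finset.mem_insert_of_mem (Finset.mem_singleton_self _)
    have hpaircard : ({a, b} : Finset V).card = 2 := Finset.card_pair hab.ne
    have heq : O.filter (· ∈ s(a, b)) = {a, b} :=
      Finset.eq_of_subset_of_card_le hsub (by omega)
    have : b ∈ O.filter (· ∈ s(a, b)) := by
      rw [heq]
      exact Finset.mem_insert_of_mem (Finset.mem_singleton_self _)
    exact (Finset.mem_filter.mp this).1
  have step8 : O = ∅ := by
    by_contra hcon
    obtain ⟨o, ho⟩ := Finset.nonempty_of_ne_empty hcon
    have hreach : ∀ (a b : V), G.Reachable a b → a ∈ O → b ∈ O := by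
      intro a b hr
      obtain ⟨w⟩ := hr
      induction w with
      | nil => exact id
      | cons h p ih => exact fun ha => ih (step7 _ _ h ha)
    have : i ∈ O := hreach o i (hconn o i) ho
    exact (Finset.mem_sdiff.mp this).2 (Finset.mem_union_left _ hiX)
  have : Finset.univ ⊆ X ∪ Y := by
    intro v _
    by_contra hv
    have : v ∈ O := Finset.mem_sdiff.mpr ⟨Finset.mem_univ _, hv⟩
    rw [step8] at this
    exact absurd this (Finset.notMem_empty _)
  exact Finset.univ_subset_iff.mp this

lemma structure_of_eq [Fintype V] (G : SimpleGraph V) (hconn : G.Connected)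
    (hbip : G.Colorable 2) (k : ℕ) (hk : 1 ≤ k)
    (hek : edgeCount G + 1 = Fintype.card V + k)
    (hall : ∀ a b, G.Adj a b → c4edge G a b = k) :
    ∃ l m : ℕ, Nonempty (G ≃g completeBipartiteGraph (Fin l) (Fin m)) := by
  classical
  letI : DecidableRel G.Adj := Classical.decRel _
  have hd1 : 1 ≤ Fintype.card V := Fintype.card_pos_iff.mpr hconn.nonempty
  -- there is an edge
  have hedge : ∃ i j, G.Adj i j := by
    by_contra h
    push_neg at h
    have hbot : G = ⊥ := by
      ext a b
      simp [h a b]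
    have : edgeCount G = 0 := by
      rw [edgeCount, hbot]
      simp
    omega
  -- every vertex has two distinct neighbors
  have hmin : ∀ v, ∃ w w', G.Adj v w ∧ G.Adj v w' ∧ w ≠ w' := by
    intro v
    obtain ⟨i0, j0, hij0⟩ := hedge
    have hnbr : ∃ w, G.Adj v w := by
      by_cases hvi : v = i0
      · exact ⟨j0, hvi ▸ hij0⟩
      · obtain ⟨u, hu, -⟩ := exists_parent hconn i0 v hvi
        exact ⟨u, hu⟩
    obtain ⟨w, hvw⟩ := hnbr
    have hck : c4edge G v w = k := hall v w hvw
    have hne : Nat.card (S4 G v w) ≠ 0 := by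
      rw [← c4edge_eq_card, hck]
      omega
    have : Nonempty (S4 G v w) := (Nat.card_ne_zero.mp hne).1
    obtain ⟨⟨⟨p1, p2⟩, h1, h2, h3, h4, h5⟩⟩ := this
    exact ⟨w, p2, hvw, h3.symm, Ne.symm h5⟩
  obtain ⟨i, j, hij⟩ := hedge
  have hunion : ∀ {a b : V}, G.Adj a b →
      G.neighborFinset b ∪ G.neighborFinset a = Finset.univ :=
    fun {a b} hab => O_empty G hbip hconn hmin k hek hall hab
  have hdisj : ∀ {a b : V}, G.Adj a b →
      Disjoint (G.neighborFinset b) (G.neighborFinset a) := by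
    intro a b hab
    rw [Finset.disjoint_left]
    intro v hv1 hv2
    rw [SimpleGraph.mem_neighborFinset] at hv1 hv2
    exact no_triangle hbip hab hv1 hv2
  have hdegsum : ∀ a b, G.Adj a b → G.degree a + G.degree b = Fintype.card V := by
    intro a b hab
    have h1 := hunion hab
    have h2 : (G.neighborFinset b ∪ G.neighborFinset a).card
        = G.degree b + G.degree a := by
      rw [Finset.card_union_of_disjoint (hdisj hab), SimpleGraph.card_neighborFinset_eq_degree,
        SimpleGraph.card_neighborFinset_eq_degree]
    rw [h1, Finset.card_univ] at h2
    omega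
  have key : ∀ a b, G.Adj a b → ∀ x ∈ G.neighborFinset b,
      G.neighborFinset x = G.neighborFinset a := by
    intro a b hab x hx
    rw [SimpleGraph.mem_neighborFinset] at hx
    have hdx : G.degree x = G.degree a := by
      have h1 := hdegsum a b hab
      have h2 := hdegsum x b hx.symm
      omega
    have hsub : G.neighborFinset x ⊆ G.neighborFinset a := by
      intro v hv
      rw [SimpleGraph.mem_neighborFinset] at hv
      have hvuniv : v ∈ G.neighborFinset b ∪ G.neighborFinset a := by
        rw [hunion hab]
        exact Finset.mem_univ _
      rcases Finset.mem_union.mp hvuniv with h | h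
      · rw [SimpleGraph.mem_neighborFinset] at h
        exact (no_triangle hbip hx hv h).elim
      · exact h
    refine Finset.eq_of_subset_of_card_le hsub ?_
    rw [SimpleGraph.card_neighborFinset_eq_degree, SimpleGraph.card_neighborFinset_eq_degree,
      hdx]
  set X := G.neighborFinset j with hX
  set Y := G.neighborFinset i with hY
  have hadjiff : ∀ a b, G.Adj a b ↔ ((a ∈ X ∧ b ∈ Y) ∨ (a ∈ Y ∧ b ∈ X)) := by
    intro a b
    constructor
    · intro hab
      have hauniv : a ∈ X ∪ Y := by rw [hX, hY, hunion hij]; exact Finset.mem_univ _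
      rcases Finset.mem_union.mp hauniv with h | h
      · left
        refine ⟨h, ?_⟩
        rw [hY, ← key i j hij a h, SimpleGraph.mem_neighborFinset]
        exact hab
      · right
        refine ⟨h, ?_⟩
        rw [hX, ← key j i hij.symm a h, SimpleGraph.mem_neighborFinset]
        exact hab
    · rintro (⟨ha, hb⟩ | ⟨ha, hb⟩)
      · have := key i j hij a ha
        rw [hY] at hb
        rw [← this, SimpleGraph.mem_neighborFinset] at hb
        exact hb
      · have := key j i hij.symm a ha
        rw [hX] at hb
        rw [← this, SimpleGraph.mem_neighborFinset] at hb
        exact hb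
  have hcompl : ∀ v, ¬ v ∈ X ↔ v ∈ Y := by
    intro v
    constructor
    · intro hv
      have : v ∈ X ∪ Y := by rw [hX, hY, hunion hij]; exact Finset.mem_univ _
      rcases Finset.mem_union.mp this with h | h
      · exact absurd h hv
      · exact h
    · intro hv hvX
      exact Finset.disjoint_left.mp (hdisj hij) hvX hv
  exact iso_completeBipartite G X Y hadjiff hcompl

lemma tree_of_connected_card [Fintype V] (G : SimpleGraph V) (hconn : G.Connected)
    (hcard : edgeCount G + 1 = Fintype.card V) : G.IsTree := by
  classical
  refine ⟨hconn, ?_⟩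
  rw [SimpleGraph.isAcyclic_iff_forall_adj_isBridge]
  intro v w hvw
  rw [SimpleGraph.isBridge_iff]
  refine fun hreach => ?_
  have hreach' : (G.deleteEdges {s(v, w)}).Reachable v w := hreach
  have hconn' : (G.deleteEdges {s(v, w)}).Connected := by
    rw [SimpleGraph.connected_iff]
    refine ⟨preconnected_deleteEdges _ ?_ hconn.preconnected, hconn.nonempty⟩
    intro a b hab
    by_cases hmem : s(a, b) ∈ ({s(v, w)} : Set (Sym2 V))
    · rw [Set.mem_singleton_iff, Sym2.eq_iff] at hmem
      rcases hmem with ⟨rfl, rfl⟩ | ⟨rfl, rfl⟩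
      · exact hreach'
      · exact hreach'.symm
    · exact (SimpleGraph.deleteEdges_adj.mpr ⟨hab, hmem⟩).reachable
  have h1 := card_le_edgeCount _ hconn'
  have h2 := edgeCount_delete_add G {s(v, w)}
    (by rw [Set.singleton_subset_iff, SimpleGraph.mem_edgeSet]; exact hvw)
  have h3 : Nat.card ({s(v, w)} : Set (Sym2 V)) = 1 := by
    rw [Nat.card_coe_set_eq, Set.ncard_singleton]
  rw [h3] at h2
  unfold edgeCount at hcard
  omega

lemma T4_empty_of_tree (G : SimpleGraph V) (hT : G.IsAcyclic) : IsEmpty (T4 G) := by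
  constructor
  rintro ⟨⟨a, b, c, d⟩, h1, h2, h3, h4, h5, h6⟩
  simp only at h1 h2 h3 h4 h5 h6
  have nab := h1.ne; have nab' := h1.ne'
  have nbc := h2.ne; have nbc' := h2.ne'
  have ncd := h3.ne; have ncd' := h3.ne'
  have nda := h4.ne; have nda' := h4.ne'
  have h5' := h5.symm; have h6' := h6.symm
  have hcyc : (SimpleGraph.Walk.cons h1 (SimpleGraph.Walk.cons h2 (SimpleGraph.Walk.cons h3
      (SimpleGraph.Walk.cons h4 SimpleGraph.Walk.nil)))).IsCycle := by
    rw [SimpleGraph.Walk.isCycle_def]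
    refine ⟨?_, by simp, ?_⟩
    · rw [SimpleGraph.Walk.isTrail_def]
      simp only [SimpleGraph.Walk.edges_cons, SimpleGraph.Walk.edges_nil, List.nodup_cons,
        List.mem_cons, List.not_mem_nil, or_false, List.nodup_nil, and_true, Sym2.eq_iff]
      tauto
    · simp only [SimpleGraph.Walk.support_cons, SimpleGraph.Walk.support_nil, List.tail_cons,
        List.nodup_cons, List.mem_cons, List.not_mem_nil, or_false, List.nodup_nil, and_true,
        List.mem_singleton]
      tauto
  exact hT _ hcyc

section IsoInvariance
variable {W : Type*}

def T4mapFun {G : SimpleGraph V} {G' : SimpleGraph W} (f : G ≃g G') (p : T4 G) : T4 G' :=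
  ⟨(f p.1.1, f p.1.2.1, f p.1.2.2.1, f p.1.2.2.2),
    f.map_rel_iff.mpr p.2.1, f.map_rel_iff.mpr p.2.2.1, f.map_rel_iff.mpr p.2.2.2.1,
    f.map_rel_iff.mpr p.2.2.2.2.1,
    fun h => p.2.2.2.2.2.1 (f.toEquiv.injective h),
    fun h => p.2.2.2.2.2.2 (f.toEquiv.injective h)⟩

def T4equiv {G : SimpleGraph V} {G' : SimpleGraph W} (f : G ≃g G') : T4 G ≃ T4 G' where
  toFun := T4mapFun f
  invFun := T4mapFun f.symm
  left_inv := by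
    rintro ⟨⟨a, b, c, d⟩, h⟩
    simp [T4mapFun]
  right_inv := by
    rintro ⟨⟨a, b, c, d⟩, h⟩
    simp [T4mapFun]

lemma c4_iso {G : SimpleGraph V} {G' : SimpleGraph W} (f : G ≃g G') : c4 G = c4 G' := by
  have h : Nat.card (T4 G) = Nat.card (T4 G') := Nat.card_congr (T4equiv f)
  show Nat.card (T4 G) / 8 = Nat.card (T4 G') / 8
  rw [h]

lemma edgeCount_iso {G : SimpleGraph V} {G' : SimpleGraph W} (f : G ≃g G') :
    edgeCount G = edgeCount G' :=
  Nat.card_congr f.mapEdgeSet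

end IsoInvariance

lemma edgeCount_K (l m : ℕ) :
    edgeCount (completeBipartiteGraph (Fin l) (Fin m)) = l * m := by
  rw [edgeCount]
  let f : Fin l × Fin m → (completeBipartiteGraph (Fin l) (Fin m)).edgeSet :=
    fun p => ⟨s(Sum.inl p.1, Sum.inr p.2), by simp⟩
  have hbij : Function.Bijective f := by
    constructor
    · rintro ⟨a, b⟩ ⟨a', b'⟩ h
      simp only [f, Subtype.mk_eq_mk, Sym2.eq_iff] at h
      rcases h with ⟨h1, h2⟩ | ⟨h1, h2⟩
      · rw [Sum.inl.injEq] at h1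
        rw [Sum.inr.injEq] at h2
        simp [h1, h2]
      · exact absurd h1 (by simp)
    · rintro ⟨e, he⟩
      induction e with
      | _ u v =>
        rw [SimpleGraph.mem_edgeSet] at he
        match u, v, he with
        | Sum.inl a, Sum.inr b, _ => exact ⟨(a, b), Subtype.ext rfl⟩
        | Sum.inr b, Sum.inl a, _ => exact ⟨(a, b), Subtype.ext (Sym2.eq_swap)⟩
        | Sum.inl a, Sum.inl a', he => simp at he
        | Sum.inr b, Sum.inr b', he => simp at he
  rw [← Nat.card_congr (Equiv.ofBijective f hbij), Nat.card_prod,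
    Nat.card_eq_fintype_card, Nat.card_eq_fintype_card, Fintype.card_fin, Fintype.card_fin]

lemma card_ne_pairs (α : Type*) [Fintype α] [DecidableEq α] :
    Nat.card {p : α × α // p.1 ≠ p.2} = Fintype.card α * (Fintype.card α - 1) := by
  have e : {p : α × α // p.1 ≠ p.2} ≃ Σ _a : α, {b : α // ¬ b = _a} :=
    { toFun := fun p => ⟨p.1.1, p.1.2, Ne.symm p.2⟩
      invFun := fun x => ⟨(x.1, x.2.1), Ne.symm x.2.2⟩
      left_inv := fun p => rfl
      right_inv := fun x => rfl }
  rw [Nat.card_congr e, Nat.card_eq_fintype_card, Fintype.card_sigma]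
  have : ∀ a : α, Fintype.card {b : α // ¬ b = a} = Fintype.card α - 1 := by
    intro a
    rw [Fintype.card_subtype_compl, Fintype.card_subtype_eq]
  simp only [this, Finset.sum_const, smul_eq_mul, Finset.card_univ]

lemma T4_K (l m : ℕ) :
    Nat.card (T4 (completeBipartiteGraph (Fin l) (Fin m))) =
      (l * (l - 1)) * (m * (m - 1)) * 2 := by
  classical
  set K := completeBipartiteGraph (Fin l) (Fin m) with hK
  let A := {p : Fin l × Fin l // p.1 ≠ p.2}
  let B := {p : Fin m × Fin m // p.1 ≠ p.2}
  let F : (A × B) ⊕ (B × A) → T4 K := fun x =>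
    match x with
    | Sum.inl (⟨(x, z), hx⟩, ⟨(y, t), hy⟩) =>
      ⟨(Sum.inl x, Sum.inr y, Sum.inl z, Sum.inr t),
        by simp [hK], by simp [hK], by simp [hK], by simp [hK],
        by simpa using hx, by simpa using hy⟩
    | Sum.inr (⟨(y, t), hy⟩, ⟨(x, z), hx⟩) =>
      ⟨(Sum.inr y, Sum.inl x, Sum.inr t, Sum.inl z),
        by simp [hK], by simp [hK], by simp [hK], by simp [hK],
        by simpa using hy, by simpa using hx⟩
  have hbij : Function.Bijective F := by
    constructor
    · rintro (⟨⟨⟨x, z⟩, hx⟩, ⟨⟨y, t⟩, hy⟩⟩ | ⟨⟨⟨y, t⟩, hy⟩, ⟨⟨x, z⟩, hx⟩⟩)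
        (⟨⟨⟨x', z'⟩, hx'⟩, ⟨⟨y', t'⟩, hy'⟩⟩ | ⟨⟨⟨y', t'⟩, hy'⟩, ⟨⟨x', z'⟩, hx'⟩⟩) h <;>
        simp only [F, Subtype.mk_eq_mk, Prod.mk.injEq, Sum.inl.injEq, Sum.inr.injEq,
          reduceCtorEq, false_and, and_false] at h
      · obtain ⟨rfl, rfl, rfl, rfl⟩ := h
        rfl
      · obtain ⟨rfl, rfl, rfl, rfl⟩ := h
        rfl
    · rintro ⟨⟨a, b, c, d⟩, h1, h2, h3, h4, h5, h6⟩
      simp only at h1 h2 h3 h4 h5 h6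
      rcases a with x | y
      · rcases b with x' | y
        · exact absurd h1 (by simp [hK])
        rcases c with z | y'
        swap
        · exact absurd h2 (by simp [hK])
        rcases d with z' | t
        · exact absurd h3 (by simp [hK])
        refine ⟨Sum.inl ⟨⟨(x, z), fun h => h5 (congrArg Sum.inl h)⟩,
          ⟨(y, t), fun h => h6 (congrArg Sum.inr h)⟩⟩, Subtype.ext rfl⟩
      · rcases b with x | y'
        swap
        · exact absurd h1 (by simp [hK])
        rcases c with z | t
        · exact absurd h2 (by simp [hK])
        rcases d with z | t'
        swap
        · exact absurd h3 (by simp [hK])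
        refine ⟨Sum.inr ⟨⟨(y, t), fun h => h5 (congrArg Sum.inr h)⟩,
          ⟨(x, z), fun h => h6 (congrArg Sum.inl h)⟩⟩, Subtype.ext rfl⟩
  have hA : Nat.card A = l * (l - 1) := by
    rw [show A = {p : Fin l × Fin l // p.1 ≠ p.2} from rfl, card_ne_pairs, Fintype.card_fin]
  have hB : Nat.card B = m * (m - 1) := by
    rw [show B = {p : Fin m × Fin m // p.1 ≠ p.2} from rfl, card_ne_pairs, Fintype.card_fin]
  rw [← Nat.card_congr (Equiv.ofBijective F hbij), Nat.card_sum, Nat.card_prod, Nat.card_prod,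
    hA, hB]
  ring

lemma natmul_pred_cast (n : ℕ) : ((n * (n - 1) : ℕ) : ℚ) = (n : ℚ) * ((n : ℚ) - 1) := by
  cases n with
  | zero => simp
  | succ p => push_cast [Nat.succ_sub_one]; ring

lemma two_dvd_mul_pred (n : ℕ) : 2 ∣ n * (n - 1) := by
  rcases Nat.even_or_odd n with h | h
  · exact Dvd.dvd.mul_right h.two_dvd _
  · refine Dvd.dvd.mul_left ⟨(n - 1) / 2, ?_⟩ _
    obtain ⟨c, hc⟩ := h
    omega

/-- For a connected bipartite graph `G` with `d` vertices and `e`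
edges, `c₄(G) ≤ e(e-d+1)/4`, with equality iff `G` is a tree or a complete
bipartite graph. -/
theorem c4_bipartite_le [Fintype V] (G : SimpleGraph V) (hconn : G.Connected)
    (hbip : G.Colorable 2) (d e : ℕ) (hd : d = Fintype.card V) (he : e = edgeCount G) :
    (c4 G : ℚ) ≤ (e : ℚ) * ((e : ℚ) - d + 1) / 4 ∧
    ((c4 G : ℚ) = (e : ℚ) * ((e : ℚ) - d + 1) / 4 ↔
      G.IsTree ∨ ∃ l m : ℕ, Nonempty (G ≃g completeBipartiteGraph (Fin l) (Fin m))) := by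
  classical
  letI : DecidableRel G.Adj := Classical.decRel _
  have hd_le : d ≤ e + 1 := by
    rw [hd, he]
    exact card_le_edgeCount G hconn
  have hc4 : c4 G = Nat.card (T4 G) / 8 := rfl
  set k := e + 1 - d with hk
  have hbound : Nat.card (T4 G) ≤ 2 * (e * k) := by
    have h := T4_bound G hconn hbip
    rw [← he, ← hd, ← hk] at h
    rwa [mul_assoc] at h
  have hdk : d + k = e + 1 := by omega
  have hcast : ((k : ℕ) : ℚ) = (e : ℚ) - d + 1 := by
    have : ((d : ℚ) + k) = (e : ℚ) + 1 := by exact_mod_cast congrArg (Nat.cast : ℕ → ℚ) hdk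
    linarith
  have hedge_bd : ∀ a b, G.Adj a b → c4edge G a b ≤ k := by
    intro a b hab
    have h := c4edge_bound G hconn hbip hab
    rw [← he, ← hd] at h
    omega
  have hineq : (c4 G : ℚ) ≤ (e : ℚ) * ((e : ℚ) - d + 1) / 4 := by
    have h1 : c4 G ≤ (2 * (e * k)) / 8 := by
      rw [hc4]
      exact Nat.div_le_div_right hbound
    calc (c4 G : ℚ) ≤ (((2 * (e * k)) / 8 : ℕ) : ℚ) := by exact_mod_cast h1
      _ ≤ ((2 * (e * k) : ℕ) : ℚ) / 8 := Nat.cast_div_le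
      _ = (e : ℚ) * ((e : ℚ) - d + 1) / 4 := by
          rw [← hcast]
          push_cast
          ring
  refine ⟨hineq, ?_, ?_⟩
  · -- equality implies tree or complete bipartite
    intro heq
    by_cases hk0 : k = 0
    · refine Or.inl (tree_of_connected_card G hconn ?_)
      rw [← he, ← hd]
      omega
    · right
      have h4ek : 4 * c4 G = e * k := by
        have : ((4 * c4 G : ℕ) : ℚ) = ((e * k : ℕ) : ℚ) := by
          push_cast
          rw [heq, ← hcast]
          push_cast
          ring
        exact_mod_cast this
      have hTcard : Nat.card (T4 G) = 2 * (e * k) := by omega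
      have hall : ∀ a b, G.Adj a b → c4edge G a b = k := by
        intro a b hab
        by_contra hne
        have hlt : c4edge G a b < k := lt_of_le_of_ne (hedge_bd a b hab) hne
        have hsum : ∑ dt : G.Dart, c4edge G dt.fst dt.snd = 2 * (e * k) := by
          rw [← card_T4, hTcard]
        have hstrict : ∑ dt : G.Dart, c4edge G dt.fst dt.snd <
            ∑ _dt : G.Dart, k :=
          Finset.sum_lt_sum (fun dt _ => hedge_bd _ _ dt.adj)
            ⟨⟨(a, b), hab⟩, Finset.mem_univ _, hlt⟩
        rw [Finset.sum_const, smul_eq_mul, Finset.card_univ, dart_count, ← he, hsum] at hstrict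
        have : 2 * e * k = 2 * (e * k) := by ring
        omega
      refine structure_of_eq G hconn hbip k (by omega) ?_ hall
      rw [← he, ← hd]
      omega
  · -- tree or complete bipartite implies equality
    rintro (hT | ⟨l, m, ⟨f⟩⟩)
    · have hE : edgeCount G = G.edgeFinset.card := by
        rw [edgeCount, SimpleGraph.edgeFinset, Set.toFinset_card, Nat.card_eq_fintype_card]
      have h0 : e + 1 = d := by
        rw [he, hd, hE]
        exact hT.card_edgeFinset
      have hc0 : c4 G = 0 := by
        haveI := T4_empty_of_tree G hT.2
        rw [hc4, Nat.card_of_isEmpty, Nat.zero_div]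
      rw [hc0]
      have hdq : (d : ℚ) = (e : ℚ) + 1 := by exact_mod_cast h0.symm
      rw [hdq]
      push_cast
      ring
    · have he' : e = l * m := by rw [he, edgeCount_iso f, edgeCount_K]
      have hd' : d = l + m := by
        rw [hd, Fintype.card_congr f.toEquiv, Fintype.card_sum, Fintype.card_fin,
          Fintype.card_fin]
      have hT4 : Nat.card (T4 G) = (l * (l - 1)) * (m * (m - 1)) * 2 := by
        rw [Nat.card_congr (T4equiv f), T4_K]
      obtain ⟨a, ha⟩ := two_dvd_mul_pred l
      obtain ⟨b, hb⟩ := two_dvd_mul_pred m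
      have hc4ab : c4 G = a * b := by
        rw [hc4, hT4, ha, hb]
        have h8 : 2 * a * (2 * b) * 2 = 8 * (a * b) := by ring
        rw [h8, Nat.mul_div_cancel_left _ (by norm_num : (0:ℕ) < 8)]
      have e1 : ((2 * a : ℕ) : ℚ) = (l : ℚ) * ((l : ℚ) - 1) := by
        rw [← ha, natmul_pred_cast]
      have e2 : ((2 * b : ℕ) : ℚ) = (m : ℚ) * ((m : ℚ) - 1) := by
        rw [← hb, natmul_pred_cast]
      push_cast at e1 e2
      rw [hc4ab, he', hd']
      push_cast
      linear_combination ((m : ℚ) * ((m : ℚ) - 1) / 4) * e1 + ((2 * (a : ℚ)) / 4) * e2
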